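/- Let P be a finite bounded poset with |P| > 1 and A a nonempty subset of P \ {0̂}. Then I(P,A) = ⋃_{E ∈ 𝓑} ⋂_{e ∈ E} F({e}), where 𝓑 is the blocker (the family of inclusion-minimal blocking sets) of the set family {At(a) : a ∈ A}, At(a) being the atoms of P below a. -/

import Mathlib

open scoped Classical
open Set

/-- The order filter generated by a subset. -/
def upFilter (P : Type*) [Preorder P] (S : Set P) : Set P := {x | ∃ s ∈ S, s ≤ x}

/-- The set of minimal elements of a subset. -/
def minsOf (P : Type*) [Preorder P] (S : Set P) : Set P := {x | Minimal (· ∈ S) x}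

/-- The set of intersecters for `A` in `P`. -/
def inters (P : Type*) [PartialOrder P] [OrderBot P] (A : Set P) : Set P :=
  if A = ∅ then Set.univ
  else if A = {(⊥ : P)} then ∅
  else {b | ∀ a ∈ A, a ≠ ⊥ → ∃ z : P, IsAtom z ∧ z ≤ b ∧ z ≤ a}

/-- The set of complementers for `A` in `P`. -/
def compls (P : Type*) [PartialOrder P] [OrderBot P] (A : Set P) : Set P := (inters P A)ᶜ

/-- The blocker map: the set of minimal intersecters for `A` in `P`. -/
def bmap (P : Type*) [PartialOrder P] [OrderBot P] (A : Set P) : Set P := minsOf P (inters P A)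

/-- The blocker of a family of sets: inclusion-minimal blocking sets. -/
def blockerFam {α : Type*} (G : Set (Set α)) : Set (Set α) :=
  {H | Minimal (fun K : Set α => ∀ S ∈ G, (K ∩ S).Nonempty) H}

theorem stmt_5 {P : Type*} [PartialOrder P] [BoundedOrder P] [Fintype P] [Nontrivial P]
    (A : Set P) (h1 : A.Nonempty) (h2 : A ⊆ {x : P | x ≠ ⊥}) :
    inters P A =
      ⋃ E ∈ blockerFam {S : Set P | ∃ a ∈ A, S = {z : P | IsAtom z ∧ z ≤ a}},
        ⋂ e ∈ E, {x : P | e ≤ x} := by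
  have hA0 : A ≠ ∅ := h1.ne_empty
  have hAb : A ≠ {⊥} := by
    intro h
    have : (⊥ : P) ∈ A := h ▸ rfl
    exact h2 this rfl
  rw [inters, if_neg hA0, if_neg hAb]
  ext b
  simp only [Set.mem_setOf_eq, Set.mem_iUnion, Set.mem_iInter, exists_prop]
  constructor
  · intro hb
    set G : Set (Set P) := {S | ∃ a ∈ A, S = {z : P | IsAtom z ∧ z ≤ a}} with hG
    set K : Set P := {z | IsAtom z ∧ z ≤ b} with hK
    have hKblock : ∀ S ∈ G, (K ∩ S).Nonempty := by
      rintro S ⟨a, ha, rfl⟩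
      obtain ⟨z, hz, hzb, hza⟩ := hb a ha (h2 ha)
      exact ⟨z, ⟨hz, hzb⟩, hz, hza⟩
    obtain ⟨E, hEK, hEmin⟩ :=
      exists_minimal_le_of_wellFoundedLT (fun K' : Set P => ∀ S ∈ G, (K' ∩ S).Nonempty) K hKblock
    refine ⟨E, hEmin, fun e he => ?_⟩
    exact (hEK he).2
  · rintro ⟨E, hE, hEb⟩ a ha _
    simp only [blockerFam, Set.mem_setOf_eq] at hE
    obtain ⟨z, hzE, hz, hza⟩ := hE.prop {z | IsAtom z ∧ z ≤ a} ⟨a, ha, rfl⟩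
    exact ⟨z, hz, hEb z hzE, hza⟩
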